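/- arXiv:1302.6295 — 3 statements merged into one kernel-verified Lean document; each statement's English description precedes it below -/
import Mathlib

section
/- If f ∈ L²(a,b) is supported in [a,b] and its Hilbert transform Hf vanishes on an open interval (c,d) disjoint from [a,b], then f = 0 almost everywhere. -/
set_option maxHeartbeats 1000000

open MeasureTheory Filter Set Topology intervalIntegral

private lemma hilb_diffAt (a b : ℝ) (hab : a ≤ b) (f : ℝ → ℝ)
    (hfi : IntegrableOn f (Icc a b) volume) (z₀ : ℂ) (ε : ℝ) (hε : 0 < ε)
    (hz : ∀ z ∈ Metric.ball z₀ ε, ∀ y ∈ Ioc a b, ε ≤ ‖(y : ℂ) - z‖) :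
    DifferentiableAt ℂ (fun z : ℂ => ∫ y in a..b, (f y : ℂ) / ((y : ℂ) - z)) z₀ := by
  have huIoc : uIoc a b = Ioc a b := uIoc_of_le hab
  have hfiIoc : IntegrableOn f (Ioc a b) volume := hfi.mono_set Ioc_subset_Icc_self
  have hmf : AEStronglyMeasurable (fun y => (f y : ℂ)) (volume.restrict (uIoc a b)) := by
    rw [huIoc]
    exact Complex.continuous_ofReal.comp_aestronglyMeasurable hfiIoc.aestronglyMeasurable
  have hmes : ∀ (z : ℂ) (k : ℕ), AEStronglyMeasurable
      (fun y : ℝ => (f y : ℂ) / ((y : ℂ) - z) ^ k) (volume.restrict (uIoc a b)) := by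
    intro z k
    have h2 : Measurable fun y : ℝ => (((y : ℂ) - z) ^ k)⁻¹ :=
      ((Complex.measurable_ofReal.sub measurable_const).pow_const k).inv
    have h3 : AEStronglyMeasurable (fun y : ℝ => (((y : ℂ) - z) ^ k)⁻¹)
        (volume.restrict (uIoc a b)) := h2.aestronglyMeasurable
    simp only [div_eq_mul_inv]; exact hmf.mul h3
  have hbint : ∀ k : ℕ, IntervalIntegrable (fun y => ‖f y‖ / ε ^ k) volume a b := by
    intro k
    rw [intervalIntegrable_iff_integrableOn_Ioc_of_le hab]
    exact hfiIoc.norm.div_const _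
  have key := intervalIntegral.hasDerivAt_integral_of_dominated_loc_of_deriv_le
    (F := fun (z : ℂ) (y : ℝ) => (f y : ℂ) / ((y : ℂ) - z))
    (F' := fun (z : ℂ) (y : ℝ) => (f y : ℂ) / ((y : ℂ) - z) ^ 2)
    (x₀ := z₀) (bound := fun y => ‖f y‖ / ε ^ 2) (a := a) (b := b) (μ := volume)
    (s := Metric.ball z₀ ε) (Metric.ball_mem_nhds z₀ hε) (Eventually.of_forall fun z => by simpa using hmes z 1) ?_ (hmes z₀ 2) ?_ (hbint 2) ?_
  · exact key.2.differentiableAt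
  · -- IntervalIntegrable (F z₀)
    rw [intervalIntegrable_iff_integrableOn_Ioc_of_le hab]
    refine Integrable.mono' (hfiIoc.norm.div_const ε) ?_ ?_
    · have := hmes z₀ 1; rw [huIoc] at this; simpa using this
    · filter_upwards [ae_restrict_mem measurableSet_Ioc] with y hy
      have h1 : ε ≤ ‖(y : ℂ) - z₀‖ := hz z₀ (Metric.mem_ball_self hε) y hy
      calc ‖(f y : ℂ) / ((y : ℂ) - z₀)‖ = ‖f y‖ / ‖(y : ℂ) - z₀‖ := by
            rw [norm_div, Complex.norm_real]
        _ ≤ ‖f y‖ / ε := by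
            gcongr
  · -- bound
    refine Eventually.of_forall fun y hy => fun z hzb => ?_
    have h1 : ε ≤ ‖(y : ℂ) - z‖ := hz z hzb y (huIoc ▸ hy)
    calc ‖(f y : ℂ) / ((y : ℂ) - z) ^ 2‖ = ‖f y‖ / ‖(y : ℂ) - z‖ ^ 2 := by
          rw [norm_div, norm_pow, Complex.norm_real]
      _ ≤ ‖f y‖ / ε ^ 2 := by
          gcongr
  · -- differentiability of integrand
    refine Eventually.of_forall fun y hy => fun z hzb => ?_
    have h1 : ε ≤ ‖(y : ℂ) - z‖ := hz z hzb y (huIoc ▸ hy)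
    have hne : (y : ℂ) - z ≠ 0 := by
      intro h; rw [h, norm_zero] at h1; exact absurd h1 (not_le.2 hε)
    have hd : HasDerivAt (fun w : ℂ => (y : ℂ) - w) (-1) z := (hasDerivAt_id z).const_sub _
    have := (hd.inv hne).const_mul (f y : ℂ)
    simp only [div_eq_mul_inv]
    exact this.congr_deriv (by rw [neg_neg, one_div])

private lemma hilb_ray_right (a b c d : ℝ) (hab : a ≤ b) (hbc : b ≤ c) (hcd : c < d)
    (f : ℝ → ℝ) (hfi : IntegrableOn f (Icc a b) volume)
    (h0 : ∀ x ∈ Ioo c d, ∫ y in a..b, f y / (y - x) = 0) :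
    ∀ x : ℝ, b < x → ∫ y in a..b, f y / (y - x) = 0 := by
  set G : ℂ → ℂ := fun z => ∫ y in a..b, (f y : ℂ) / ((y : ℂ) - z) with hG
  set U : Set ℂ := {z : ℂ | b < z.re} with hUdef
  have hUopen : IsOpen U := isOpen_lt continuous_const Complex.continuous_re
  have hGreal : ∀ x : ℝ, G x = ((∫ y in a..b, f y / (y - x) : ℝ) : ℂ) := by
    intro x
    rw [hG, ← intervalIntegral.integral_ofReal]
    apply intervalIntegral.integral_congr
    intro y _
    push_cast
    rfl
  have hA : AnalyticOnNhd ℂ G U := by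
    apply DifferentiableOn.analyticOnNhd ?_ hUopen
    intro z hz
    refine (hilb_diffAt a b hab f hfi z ((z.re - b) / 2) (by have : b < z.re := hz; linarith) ?_).differentiableWithinAt
    intro w hw y hy
    have h1 : |w.re - z.re| ≤ ‖w - z‖ := by
      simpa using Complex.abs_re_le_norm (w - z)
    have h2 : ‖w - z‖ < (z.re - b) / 2 := by simpa [Metric.mem_ball, dist_eq_norm] using hw
    have h3 : |((y : ℂ) - w).re| ≤ ‖(y : ℂ) - w‖ := by
      simpa using Complex.abs_re_le_norm ((y : ℂ) - w)
    have h4 : ((y : ℂ) - w).re = y - w.re := by simp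
    have hyb : y ≤ b := hy.2
    have habs := abs_le.1 h1
    calc (z.re - b) / 2 ≤ |y - w.re| := by
          rw [abs_sub_comm]
          refine le_trans ?_ (le_abs_self _)
          have : b < z.re := hz
          linarith [habs.1]
      _ ≤ ‖(y : ℂ) - w‖ := by rw [← h4] at *; exact h3
  have hpre : IsPreconnected U := (convex_halfSpace_re_gt b).isPreconnected
  have hz₀U : (((c + d) / 2 : ℝ) : ℂ) ∈ U := by
    simp only [hUdef, mem_setOf_eq, Complex.ofReal_re]
    linarith
  have hG0 : ∀ x ∈ Ioo c d, G (x : ℂ) = 0 := by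
    intro x hx
    rw [hGreal, h0 x hx, Complex.ofReal_zero]
  -- frequently
  set u : ℕ → ℂ := fun n => (((c + d) / 2 + (d - c) / 4 * (1 / (n + 1)) : ℝ) : ℂ) with hu
  have humem : ∀ n : ℕ, ((c + d) / 2 + (d - c) / 4 * (1 / ((n : ℝ) + 1))) ∈ Ioo c d := by
    intro n
    have hn : 0 < (n : ℝ) + 1 := by positivity
    have h5 : 0 < (d - c) / 4 * (1 / ((n : ℝ) + 1)) :=
      mul_pos (by linarith) (by positivity)
    have h6 : (1 : ℝ) / ((n : ℝ) + 1) ≤ 1 := by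
      rw [div_le_one hn]; linarith [Nat.cast_nonneg (α := ℝ) n]
    constructor
    · linarith
    · nlinarith [sub_pos.2 hcd]
  have htendreal : Tendsto (fun n : ℕ => (c + d) / 2 + (d - c) / 4 * (1 / ((n : ℝ) + 1)))
      atTop (𝓝 ((c + d) / 2)) := by
    have h8 := (tendsto_const_nhds (x := (c + d) / 2) (f := atTop (α := ℕ))).add
      (tendsto_one_div_add_atTop_nhds_zero_nat.const_mul ((d - c) / 4))
    simpa using h8
  have htend : Tendsto u atTop (𝓝[≠] (((c + d) / 2 : ℝ) : ℂ)) := by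
    rw [tendsto_nhdsWithin_iff]
    constructor
    · exact (Complex.continuous_ofReal.tendsto _).comp htendreal
    · refine Eventually.of_forall fun n => ?_
      simp only [u, mem_compl_iff, mem_singleton_iff, Complex.ofReal_inj]
      intro h
      have hn : 0 < (n : ℝ) + 1 := by positivity
      have h5 : 0 < (d - c) / 4 * (1 / ((n : ℝ) + 1)) :=
        mul_pos (by linarith) (by positivity)
      linarith
  have hfreq : ∃ᶠ z in 𝓝[≠] (((c + d) / 2 : ℝ) : ℂ), G z = 0 :=
    htend.frequently (Frequently.of_forall fun n => hG0 _ (humem n))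
  have hEq : EqOn G 0 U :=
    hA.eqOn_zero_of_preconnected_of_frequently_eq_zero hpre hz₀U hfreq
  intro x hx
  have hxU : (x : ℂ) ∈ U := by simpa [hUdef] using hx
  have := hEq hxU
  simp only [Pi.zero_apply] at this
  rw [hGreal] at this
  exact_mod_cast this

private lemma hilb_ray_left (a b c d : ℝ) (hab : a ≤ b) (hda : d ≤ a) (hcd : c < d)
    (f : ℝ → ℝ) (hfi : IntegrableOn f (Icc a b) volume)
    (h0 : ∀ x ∈ Ioo c d, ∫ y in a..b, f y / (y - x) = 0) :
    ∀ x : ℝ, x < a → ∫ y in a..b, f y / (y - x) = 0 := by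
  set G : ℂ → ℂ := fun z => ∫ y in a..b, (f y : ℂ) / ((y : ℂ) - z) with hG
  set U : Set ℂ := {z : ℂ | z.re < a} with hUdef
  have hUopen : IsOpen U := isOpen_lt Complex.continuous_re continuous_const
  have hGreal : ∀ x : ℝ, G x = ((∫ y in a..b, f y / (y - x) : ℝ) : ℂ) := by
    intro x
    rw [hG, ← intervalIntegral.integral_ofReal]
    apply intervalIntegral.integral_congr
    intro y _
    push_cast
    rfl
  have hA : AnalyticOnNhd ℂ G U := by
    apply DifferentiableOn.analyticOnNhd ?_ hUopen
    intro z hz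
    refine (hilb_diffAt a b hab f hfi z ((a - z.re) / 2) (by simp only [hUdef, mem_setOf_eq] at hz; linarith) ?_).differentiableWithinAt
    intro w hw y hy
    have h1 : |w.re - z.re| ≤ ‖w - z‖ := by
      simpa using Complex.abs_re_le_norm (w - z)
    have h2 : ‖w - z‖ < (a - z.re) / 2 := by simpa [Metric.mem_ball, dist_eq_norm] using hw
    have h3 : |((y : ℂ) - w).re| ≤ ‖(y : ℂ) - w‖ := by
      simpa using Complex.abs_re_le_norm ((y : ℂ) - w)
    have h4 : ((y : ℂ) - w).re = y - w.re := by simp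
    have hya : a < y := hy.1
    have habs := abs_le.1 h1
    have hzre : z.re < a := hz
    calc (a - z.re) / 2 ≤ |y - w.re| := by
          refine le_trans ?_ (le_abs_self _)
          linarith [habs.2]
      _ ≤ ‖(y : ℂ) - w‖ := by rw [← h4] at *; exact h3
  have hpre : IsPreconnected U := (convex_halfSpace_re_lt a).isPreconnected
  have hz₀U : (((c + d) / 2 : ℝ) : ℂ) ∈ U := by
    simp only [hUdef, mem_setOf_eq, Complex.ofReal_re]
    linarith
  have hG0 : ∀ x ∈ Ioo c d, G (x : ℂ) = 0 := by
    intro x hx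
    rw [hGreal, h0 x hx, Complex.ofReal_zero]
  set u : ℕ → ℂ := fun n => (((c + d) / 2 + (d - c) / 4 * (1 / (n + 1)) : ℝ) : ℂ) with hu
  have humem : ∀ n : ℕ, ((c + d) / 2 + (d - c) / 4 * (1 / ((n : ℝ) + 1))) ∈ Ioo c d := by
    intro n
    have hn : 0 < (n : ℝ) + 1 := by positivity
    have h5 : 0 < (d - c) / 4 * (1 / ((n : ℝ) + 1)) :=
      mul_pos (by linarith) (by positivity)
    have h6 : (1 : ℝ) / ((n : ℝ) + 1) ≤ 1 := by
      rw [div_le_one hn]; linarith [Nat.cast_nonneg (α := ℝ) n]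
    constructor
    · linarith
    · nlinarith [sub_pos.2 hcd]
  have htendreal : Tendsto (fun n : ℕ => (c + d) / 2 + (d - c) / 4 * (1 / ((n : ℝ) + 1)))
      atTop (𝓝 ((c + d) / 2)) := by
    have h8 := (tendsto_const_nhds (x := (c + d) / 2) (f := atTop (α := ℕ))).add
      (tendsto_one_div_add_atTop_nhds_zero_nat.const_mul ((d - c) / 4))
    simpa using h8
  have htend : Tendsto u atTop (𝓝[≠] (((c + d) / 2 : ℝ) : ℂ)) := by
    rw [tendsto_nhdsWithin_iff]
    constructor
    · exact (Complex.continuous_ofReal.tendsto _).comp htendreal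
    · refine Eventually.of_forall fun n => ?_
      simp only [u, mem_compl_iff, mem_singleton_iff, Complex.ofReal_inj]
      intro h
      have hn : 0 < (n : ℝ) + 1 := by positivity
      have h5 : 0 < (d - c) / 4 * (1 / ((n : ℝ) + 1)) :=
        mul_pos (by linarith) (by positivity)
      linarith
  have hfreq : ∃ᶠ z in 𝓝[≠] (((c + d) / 2 : ℝ) : ℂ), G z = 0 :=
    htend.frequently (Frequently.of_forall fun n => hG0 _ (humem n))
  have hEq : EqOn G 0 U :=
    hA.eqOn_zero_of_preconnected_of_frequently_eq_zero hpre hz₀U hfreq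
  intro x hx
  have hxU : (x : ℂ) ∈ U := by simpa [hUdef] using hx
  have := hEq hxU
  simp only [Pi.zero_apply] at this
  rw [hGreal] at this
  exact_mod_cast this

private lemma hilb_moments (a b : ℝ) (hab : a ≤ b) (f : ℝ → ℝ)
    (hfi : IntegrableOn f (Icc a b) volume) (x : ℕ → ℝ)
    (hd : ∀ j : ℕ, ∀ y ∈ Icc a b, (j : ℝ) + 1 ≤ |y - x j|)
    (h0 : ∀ j : ℕ, ∫ y in a..b, f y / (y - x j) = 0) :
    ∀ n : ℕ, ∫ y in a..b, f y * y ^ n = 0 := by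
  have huIcc : uIcc a b = Icc a b := uIcc_of_le hab
  have hne : ∀ j : ℕ, ∀ y ∈ Icc a b, y - x j ≠ 0 := by
    intro j y hy h
    have := hd j y hy
    rw [h, abs_zero] at this
    have : (0:ℝ) < (j:ℝ) + 1 := by positivity
    linarith
  have Ik : ∀ k : ℕ, IntervalIntegrable (fun y => f y * y ^ k) volume a b := by
    intro k
    rw [intervalIntegrable_iff_integrableOn_Ioc_of_le hab]
    exact (hfi.mul_continuousOn (Continuous.continuousOn (by continuity)) isCompact_Icc).mono_set
      Ioc_subset_Icc_self
  intro n
  induction n using Nat.strong_induction_on with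
  | _ n IH =>
  -- integrability of the singular term
  have IA : ∀ j : ℕ, IntervalIntegrable (fun y => f y * (y ^ (n + 1) / (y - x j))) volume a b := by
    intro j
    rw [intervalIntegrable_iff_integrableOn_Ioc_of_le hab]
    refine (hfi.mul_continuousOn (ContinuousOn.div
      (Continuous.continuousOn (by continuity)) (Continuous.continuousOn (by continuity))
      (hne j)) isCompact_Icc).mono_set Ioc_subset_Icc_self
  have IB : ∀ j : ℕ, IntervalIntegrable (fun y => f y * ((x j) ^ (n + 1) / (y - x j))) volume a b := by
    intro j
    rw [intervalIntegrable_iff_integrableOn_Ioc_of_le hab]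
    exact (IntegrableOn.mul_continuousOn (g' := fun y => (x j) ^ (n + 1) / (y - x j)) hfi
      (ContinuousOn.div continuousOn_const (Continuous.continuousOn (by continuity))
      (hne j)) isCompact_Icc).mono_set Ioc_subset_Icc_self
  have key : ∀ j : ℕ, (∫ y in a..b, f y * y ^ n) = ∫ y in a..b, f y * (y ^ (n + 1) / (y - x j)) := by
    intro j
    have hB : (∫ y in a..b, f y * ((x j) ^ (n + 1) / (y - x j))) = 0 := by
      have : (∫ y in a..b, f y * ((x j) ^ (n + 1) / (y - x j)))
          = ∫ y in a..b, f y / (y - x j) * (x j) ^ (n + 1) :=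
        intervalIntegral.integral_congr fun y _ => by ring
      rw [this, intervalIntegral.integral_mul_const, h0 j, zero_mul]
    have e1 : (∫ y in a..b, f y * (y ^ (n + 1) / (y - x j)))
        - (∫ y in a..b, f y * ((x j) ^ (n + 1) / (y - x j)))
        = ∫ y in a..b, (f y * (y ^ (n + 1) / (y - x j)) - f y * ((x j) ^ (n + 1) / (y - x j))) :=
      (intervalIntegral.integral_sub (IA j) (IB j)).symm
    rw [hB, sub_zero] at e1
    rw [e1]
    have e2 : ∫ y in a..b, (f y * (y ^ (n + 1) / (y - x j)) - f y * ((x j) ^ (n + 1) / (y - x j)))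
        = ∫ y in a..b, ∑ i ∈ Finset.range (n + 1), f y * y ^ i * (x j) ^ (n - i) := by
      apply intervalIntegral.integral_congr
      intro y hy
      rw [huIcc] at hy
      have hyx := hne j y hy
      have hg := geom_sum₂_mul y (x j) (n + 1)
      simp only [Nat.add_sub_cancel] at hg
      have h2 : (y ^ (n + 1) - (x j) ^ (n + 1)) / (y - x j)
          = ∑ i ∈ Finset.range (n + 1), y ^ i * (x j) ^ (n - i) := by
        rw [← hg, mul_div_cancel_right₀ _ hyx]
      calc f y * (y ^ (n + 1) / (y - x j)) - f y * ((x j) ^ (n + 1) / (y - x j))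
          = f y * ((y ^ (n + 1) - (x j) ^ (n + 1)) / (y - x j)) := by ring
        _ = f y * ∑ i ∈ Finset.range (n + 1), y ^ i * (x j) ^ (n - i) := by rw [h2]
        _ = ∑ i ∈ Finset.range (n + 1), f y * y ^ i * (x j) ^ (n - i) := by
            rw [Finset.mul_sum]; exact Finset.sum_congr rfl fun i _ => by ring
    rw [e2, intervalIntegral.integral_finset_sum (fun i _ => (Ik i).mul_const _)]
    have e3 : ∀ i ∈ Finset.range (n + 1),
        (∫ y in a..b, f y * y ^ i * (x j) ^ (n - i))
        = (∫ y in a..b, f y * y ^ i) * (x j) ^ (n - i) :=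
      fun i _ => intervalIntegral.integral_mul_const _ _
    rw [Finset.sum_congr rfl e3]
    rw [Finset.sum_eq_single n]
    · simp
    · intro i hi hin
      have : i < n := lt_of_le_of_ne (Nat.lt_succ_iff.1 (Finset.mem_range.1 hi)) hin
      rw [IH i this, zero_mul]
    · intro h; exact absurd (Finset.self_mem_range_succ n) h
  -- bound
  set D : ℝ := ∫ y in a..b, |f y| * |y| ^ (n + 1) with hD
  have hDint : IntervalIntegrable (fun y => |f y| * |y| ^ (n + 1)) volume a b := by
    rw [intervalIntegrable_iff_integrableOn_Ioc_of_le hab]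
    have hfin : IntegrableOn (fun y => |f y|) (Icc a b) volume := by
      have := hfi.norm; simp only [Real.norm_eq_abs] at this; exact this
    exact (IntegrableOn.mul_continuousOn (g' := fun y : ℝ => |y| ^ (n + 1)) hfin
      (Continuous.continuousOn (by continuity)) isCompact_Icc).mono_set Ioc_subset_Icc_self
  have hbound : ∀ j : ℕ, |∫ y in a..b, f y * y ^ n| ≤ D * (1 / ((j : ℝ) + 1)) := by
    intro j
    rw [key j]
    have h1 : |∫ y in a..b, f y * (y ^ (n + 1) / (y - x j))|
        ≤ ∫ y in a..b, ‖f y * (y ^ (n + 1) / (y - x j))‖ := by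
      rw [← Real.norm_eq_abs]
      exact intervalIntegral.norm_integral_le_integral_norm hab
    refine h1.trans ?_
    have h2 : ∫ y in a..b, ‖f y * (y ^ (n + 1) / (y - x j))‖
        ≤ ∫ y in a..b, |f y| * |y| ^ (n + 1) * (1 / ((j : ℝ) + 1)) := by
      apply intervalIntegral.integral_mono_on hab
      · rw [intervalIntegrable_iff_integrableOn_Ioc_of_le hab]
        exact (intervalIntegrable_iff_integrableOn_Ioc_of_le hab).1 (IA j) |>.norm
      · exact hDint.mul_const _
      · intro y hy
        have hdj := hd j y hy
        have hj : (0:ℝ) < (j : ℝ) + 1 := by positivity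
        rw [Real.norm_eq_abs, abs_mul, abs_div, abs_pow]
        calc |f y| * (|y| ^ (n + 1) / |y - x j|)
            ≤ |f y| * (|y| ^ (n + 1) / ((j : ℝ) + 1)) := by gcongr
          _ = |f y| * |y| ^ (n + 1) * (1 / ((j : ℝ) + 1)) := by ring
    refine h2.trans ?_
    rw [intervalIntegral.integral_mul_const]
  have htend : Tendsto (fun j : ℕ => D * (1 / ((j : ℝ) + 1))) atTop (𝓝 0) := by
    simpa using tendsto_one_div_add_atTop_nhds_zero_nat.const_mul D
  have hle : |∫ y in a..b, f y * y ^ n| ≤ 0 :=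
    ge_of_tendsto htend (Eventually.of_forall hbound)
  exact abs_eq_zero.1 (le_antisymm hle (abs_nonneg _))

private lemma hilb_testfn (a b : ℝ) (hab : a ≤ b) (f : ℝ → ℝ)
    (hfi : IntegrableOn f (Icc a b) volume)
    (hm : ∀ n : ℕ, ∫ y in a..b, f y * y ^ n = 0)
    (g : ℝ → ℝ) (hg : Continuous g) :
    ∫ y in a..b, g y * f y = 0 := by
  have huIcc : uIcc a b = Icc a b := uIcc_of_le hab
  have Ik : ∀ k : ℕ, IntervalIntegrable (fun y => f y * y ^ k) volume a b := by
    intro k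
    rw [intervalIntegrable_iff_integrableOn_Ioc_of_le hab]
    exact (hfi.mul_continuousOn (Continuous.continuousOn (by continuity)) isCompact_Icc).mono_set
      Ioc_subset_Icc_self
  -- any polynomial integrates to zero against f
  have hpoly : ∀ q : Polynomial ℝ, ∫ y in a..b, q.eval y * f y = 0 := by
    intro q
    have e1 : ∀ y : ℝ, q.eval y * f y
        = ∑ i ∈ Finset.range (q.natDegree + 1), q.coeff i * (f y * y ^ i) := by
      intro y
      rw [Polynomial.eval_eq_sum_range, Finset.sum_mul]
      exact Finset.sum_congr rfl fun i _ => by ring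
    rw [intervalIntegral.integral_congr (fun y _ => e1 y),
      intervalIntegral.integral_finset_sum (fun i _ => (Ik i).const_mul _)]
    refine Finset.sum_eq_zero fun i _ => ?_
    rw [intervalIntegral.integral_const_mul, hm i, mul_zero]
  -- integrability facts for continuous multipliers
  have Ig : ∀ h : ℝ → ℝ, Continuous h → IntervalIntegrable (fun y => h y * f y) volume a b := by
    intro h hh
    rw [intervalIntegrable_iff_integrableOn_Ioc_of_le hab]
    exact (IntegrableOn.continuousOn_mul_of_subset hh.continuousOn hfi isCompact_Icc
      measurableSet_Icc (Subset.refl _)).mono_set Ioc_subset_Icc_self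
  have hfabs : IntervalIntegrable (fun y => |f y|) volume a b := by
    rw [intervalIntegrable_iff_integrableOn_Ioc_of_le hab]
    have := (hfi.mono_set Ioc_subset_Icc_self).norm; simp only [Real.norm_eq_abs] at this; exact this
  set D : ℝ := ∫ y in a..b, |f y| with hD
  have hD0 : 0 ≤ D := intervalIntegral.integral_nonneg hab fun y _ => abs_nonneg _
  -- approximate g by polynomials
  by_contra hne
  set ε : ℝ := |∫ y in a..b, g y * f y| / (D + 1) with hε
  have hεpos : 0 < ε := div_pos (abs_pos.2 hne) (by linarith)
  set gc : C((Icc a b : Set ℝ), ℝ) := ⟨fun y => g y, hg.comp continuous_subtype_val⟩ with hgc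
  have hmem : gc ∈ closure ((polynomialFunctions (Icc a b) : Subalgebra ℝ C((Icc a b : Set ℝ), ℝ)) : Set C((Icc a b : Set ℝ), ℝ)) := by
    rw [← Subalgebra.topologicalClosure_coe, polynomialFunctions_closure_eq_top a b]
    trivial
  obtain ⟨p, hpmem, hpdist⟩ := Metric.mem_closure_iff.1 hmem ε hεpos
  obtain ⟨q, -, rfl⟩ := hpmem
  -- the bound
  have hqc : Continuous fun y : ℝ => q.eval y := q.continuous
  have hb1 : |∫ y in a..b, g y * f y| = |∫ y in a..b, (g y - q.eval y) * f y| := by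
    have e2 : (∫ y in a..b, (g y - q.eval y) * f y)
        = (∫ y in a..b, g y * f y) - ∫ y in a..b, q.eval y * f y := by
      rw [← intervalIntegral.integral_sub (Ig g hg) (Ig _ hqc)]
      exact intervalIntegral.integral_congr fun y _ => by ring
    rw [e2, hpoly q, sub_zero]
  have hptw : ∀ y ∈ Icc a b, |g y - q.eval y| ≤ ε := by
    intro y hy
    have h3 := ContinuousMap.dist_apply_le_dist (f := gc)
      (g := Polynomial.toContinuousMapOnAlgHom (Icc a b) q) (⟨y, hy⟩ : (Icc a b : Set ℝ))
    rw [Real.dist_eq] at h3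
    simp only [hgc, ContinuousMap.coe_mk, Polynomial.toContinuousMapOnAlgHom_apply,
      Polynomial.toContinuousMapOn_apply, Polynomial.toContinuousMap_apply] at h3
    exact h3.trans hpdist.le
  have hb2 : |∫ y in a..b, (g y - q.eval y) * f y| ≤ ε * D := by
    rw [← Real.norm_eq_abs]
    refine (intervalIntegral.norm_integral_le_integral_norm hab).trans ?_
    have h4 : (∫ y in a..b, ‖(g y - q.eval y) * f y‖) ≤ ∫ y in a..b, ε * |f y| := by
      apply intervalIntegral.integral_mono_on hab (Ig _ (hg.sub hqc)).norm (hfabs.const_mul ε)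
      intro y hy
      rw [Real.norm_eq_abs, abs_mul]
      exact mul_le_mul_of_nonneg_right (hptw y hy) (abs_nonneg _)
    refine h4.trans ?_
    rw [intervalIntegral.integral_const_mul]
  have hlt : ε * D < |∫ y in a..b, g y * f y| := by
    rw [hε, div_mul_eq_mul_div, div_lt_iff₀ (by linarith : (0:ℝ) < D + 1)]
    nlinarith [abs_pos.2 hne]
  rw [hb1] at hlt
  linarith

/-- If `f ∈ L²(a,b)` is supported in `[a,b]` and its Hilbert transform vanishes on an
open interval `(c,d)` disjoint from `[a,b]` (where it is given by the ordinary integral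
`(1/π) ∫_a^b f(y)/(y-x) dy`), then `f = 0` almost everywhere. -/
theorem hilbert_vanishes_on_interval_implies_zero
    (a b c d : ℝ) (hab : a < b) (hcd : c < d)
    (hdisj : Disjoint (Icc a b) (Ioo c d))
    (f : ℝ → ℝ) (hf : MemLp f 2 (volume : Measure ℝ))
    (hsupp : Function.support f ⊆ Icc a b)
    (hH : ∀ x ∈ Ioo c d, (1 / Real.pi) * ∫ y in a..b, f y / (y - x) = 0) :
    f =ᵐ[volume] 0 := by
  have hle : a ≤ b := hab.le
  have hfIcc : IntegrableOn f (Icc a b) volume := by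
    have h1 : MemLp f 2 (volume.restrict (Icc a b)) := hf.restrict _
    haveI : IsFiniteMeasure (volume.restrict (Icc a b)) := by
      constructor
      rw [Measure.restrict_apply_univ]
      exact measure_Icc_lt_top
    exact h1.integrable one_le_two
  have h0' : ∀ x ∈ Ioo c d, ∫ y in a..b, f y / (y - x) = 0 := by
    intro x hx
    rcases mul_eq_zero.1 (hH x hx) with h | h
    · exact absurd h (one_div_ne_zero Real.pi_ne_zero)
    · exact h
  have hcase : d ≤ a ∨ b ≤ c := by
    by_contra h
    push_neg at h
    obtain ⟨h1, h2⟩ := h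
    have hm : max a c < min b d :=
      max_lt (lt_min hab h1) (lt_min h2 hcd)
    refine absurd hdisj (Set.not_disjoint_iff.2 ⟨(max a c + min b d) / 2, ⟨?_, ?_⟩, ?_, ?_⟩)
    · linarith [le_max_left a c]
    · linarith [min_le_left b d]
    · linarith [le_max_right a c]
    · linarith [min_le_right b d]
  have hmom : ∀ n : ℕ, ∫ y in a..b, f y * y ^ n = 0 := by
    rcases hcase with hda | hbc
    · -- interval to the left : ray to the left of a
      have hray := hilb_ray_left a b c d hle hda hcd f hfIcc h0'
      refine hilb_moments a b hle f hfIcc (fun j => a - j - 1) ?_ ?_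
      · intro j y hy
        obtain ⟨hy1, hy2⟩ := hy
        have hj : (0:ℝ) ≤ (j : ℝ) := Nat.cast_nonneg j
        show (j : ℝ) + 1 ≤ |y - (a - (j : ℝ) - 1)|
        rw [abs_of_nonneg (by linarith)]
        linarith
      · intro j
        have hj : (0:ℝ) ≤ (j : ℝ) := Nat.cast_nonneg j
        exact hray _ (show a - (j : ℝ) - 1 < a by linarith)
    · -- interval to the right : ray to the right of b
      have hray := hilb_ray_right a b c d hle hbc hcd f hfIcc h0'
      refine hilb_moments a b hle f hfIcc (fun j => b + j + 1) ?_ ?_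
      · intro j y hy
        obtain ⟨hy1, hy2⟩ := hy
        have hj : (0:ℝ) ≤ (j : ℝ) := Nat.cast_nonneg j
        show (j : ℝ) + 1 ≤ |y - (b + (j : ℝ) + 1)|
        rw [abs_sub_comm, abs_of_nonneg (by linarith)]
        linarith
      · intro j
        have hj : (0:ℝ) ≤ (j : ℝ) := Nat.cast_nonneg j
        exact hray _ (show b < b + (j : ℝ) + 1 by linarith)
  have htest := hilb_testfn a b hle f hfIcc hmom
  have hint : Integrable f volume := by
    rw [← Set.indicator_eq_self.2 hsupp]
    exact (integrable_indicator_iff measurableSet_Icc).2 hfIcc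
  have hae := ae_eq_zero_of_integral_contDiff_smul_eq_zero (μ := (volume : Measure ℝ))
    hint.locallyIntegrable ?_
  · filter_upwards [hae] with x hx
    simpa using hx
  · intro g hgs _
    have h5 : ∀ x, x ∉ Icc a b → g x • f x = 0 := by
      intro x hx
      rw [Function.notMem_support.1 (fun hs => hx (hsupp hs)), smul_zero]
    rw [← setIntegral_eq_integral_of_forall_compl_eq_zero h5]
    have e6 : ∫ x in Icc a b, g x • f x ∂(volume : Measure ℝ) = ∫ x in a..b, g x * f x := by
      rw [MeasureTheory.integral_Icc_eq_integral_Ioc, intervalIntegral.integral_of_le hle]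
      simp [smul_eq_mul]
    rw [e6]
    exact htest g hgs.continuous
end

section
/- The truncated Hilbert transform with overlap H_T : L²(a₂,a₄) → L²(a₁,a₃) has trivial nullspace: if H_T f = 0 then f = 0. -/
open MeasureTheory Filter Set
open scoped ENNReal NNReal

/-- The Hilbert transform `(Hf)(x) = (1/π) p.v. ∫ f(y)/(y-x) dy`, defined as a
principal value: the limit as `ε → 0⁺` of the truncated integrals. -/
noncomputable def pvHilbert (f : ℝ → ℝ) (x : ℝ) : ℝ :=
  limUnder (nhdsWithin (0 : ℝ) (Ioi 0))
    (fun ε => (1 / Real.pi) * ∫ y in {y : ℝ | ε ≤ |y - x|}, f y / (y - x))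

/-- The truncated Hilbert transform with overlap `H_T = P_{[a₁,a₃]} H P_{[a₂,a₄]}`. -/
noncomputable def truncHT (a₁ a₂ a₃ a₄ : ℝ) (f : ℝ → ℝ) : ℝ → ℝ :=
  (Icc a₁ a₃).indicator (pvHilbert ((Icc a₂ a₄).indicator f))

namespace TruncHTAux


/-- Integrability of integrable function times a function bounded on a superset of its support. -/
lemma integrable_mul_bdd {f g : ℝ → ℝ} (hf : Integrable f (volume : Measure ℝ))
    (hg : AEStronglyMeasurable g (volume : Measure ℝ)) {s : Set ℝ}
    (hs : Function.support f ⊆ s) {C : ℝ} (hC : ∀ y ∈ s, |g y| ≤ C) :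
    Integrable (fun y => f y * g y) (volume : Measure ℝ) := by
  refine Integrable.mono' (hf.norm.const_mul C) (hf.aestronglyMeasurable.mul hg) ?_
  filter_upwards with y
  by_cases hy : f y = 0
  · simp [hy]
  · have h1 := hC y (hs hy)
    rw [Real.norm_eq_abs, Real.norm_eq_abs, abs_mul]
    calc |f y| * |g y| ≤ |f y| * C := by gcongr
      _ = C * |f y| := mul_comm _ _

lemma integral_abs_mul_bdd {f g : ℝ → ℝ} (hf : Integrable f (volume : Measure ℝ))
    (hg : AEStronglyMeasurable g (volume : Measure ℝ)) {s : Set ℝ}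
    (hs : Function.support f ⊆ s) {C : ℝ} (hC : ∀ y ∈ s, |g y| ≤ C) :
    ∫ y, |f y * g y| ≤ C * ∫ y, |f y| := by
  have hint := integrable_mul_bdd hf hg hs hC
  have h2 : ∀ y, |f y * g y| ≤ C * |f y| := by
    intro y
    by_cases hy : f y = 0
    · simp [hy]
    · have h1 := hC y (hs hy)
      rw [abs_mul]
      calc |f y| * |g y| ≤ |f y| * C := by gcongr
        _ = C * |f y| := mul_comm _ _
  calc ∫ y, |f y * g y| ≤ ∫ y, C * |f y| :=
        integral_mono hint.abs (hf.norm.const_mul C) h2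
    _ = C * ∫ y, |f y| := integral_const_mul _ _

lemma abs_integral_mul_bdd {f g : ℝ → ℝ} (hf : Integrable f (volume : Measure ℝ))
    (hg : AEStronglyMeasurable g (volume : Measure ℝ)) {s : Set ℝ}
    (hs : Function.support f ⊆ s) {C : ℝ} (hC : ∀ y ∈ s, |g y| ≤ C) :
    |∫ y, f y * g y| ≤ C * ∫ y, |f y| := by
  refine le_trans ?_ (integral_abs_mul_bdd hf hg hs hC)
  have := norm_integral_le_integral_norm (fun y => f y * g y) (μ := (volume : Measure ℝ))
  simpa only [Real.norm_eq_abs] using this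



lemma hasSum_inv_geom {d t u : ℝ} (hd : 0 < d) (ht : |t| < d) (hu : d ≤ u) :
    HasSum (fun n => t ^ n / u ^ (n + 1)) (1 / (u - t)) := by
  have hu0 : 0 < u := hd.trans_le hu
  have hut : t < u := lt_of_le_of_lt (le_abs_self t) (ht.trans_le hu)
  have hr : |t / u| < 1 := by
    rw [abs_div, abs_of_pos hu0, div_lt_one hu0]
    exact ht.trans_le hu
  have h := (hasSum_geometric_of_abs_lt_one hr).mul_right u⁻¹
  have he : ∀ n : ℕ, (t / u) ^ n * u⁻¹ = t ^ n / u ^ (n + 1) := by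
    intro n
    rw [div_pow, pow_succ, div_eq_mul_inv, div_eq_mul_inv, mul_inv, ← mul_assoc]
  have hv : (1 - t / u)⁻¹ * u⁻¹ = 1 / (u - t) := by
    rw [one_div, ← mul_inv]
    congr 1
    field_simp
  rw [funext he, hv] at h
  exact h



/-- measurability of the kernel -/
lemma meas_kernel (c : ℝ) (x₀ : ℝ) (k : ℕ) :
    AEStronglyMeasurable (fun y : ℝ => c / (y - x₀) ^ k) (volume : Measure ℝ) :=
  (measurable_const.div ((measurable_id.sub_const x₀).pow_const k)).aestronglyMeasurable

/-- bound for the kernel on the support interval -/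
lemma kernel_bdd {a₂ a₄ x₀ : ℝ} (hd : x₀ < a₂) (c : ℝ) (k : ℕ) :
    ∀ y ∈ Icc a₂ a₄, |c / (y - x₀) ^ k| ≤ |c| / (a₂ - x₀) ^ k := by
  intro y hy
  have h1 : (0:ℝ) < a₂ - x₀ := by linarith
  have h2 : a₂ - x₀ ≤ y - x₀ := by have := hy.1; linarith
  have h3 : (0:ℝ) < (y - x₀) ^ k := pow_pos (h1.trans_le h2) k
  rw [abs_div, abs_of_pos h3]
  gcongr

lemma hasSum_coeff {a₂ a₄ : ℝ} {f : ℝ → ℝ} (hf : Integrable f (volume : Measure ℝ))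
    (hsupp : Function.support f ⊆ Icc a₂ a₄) {x₀ t : ℝ} (hd : x₀ < a₂)
    (ht : |t| < a₂ - x₀) :
    HasSum (fun n => (∫ y, f y / (y - x₀) ^ (n + 1)) * t ^ n)
      (∫ y, f y / (y - (x₀ + t))) := by
  set d : ℝ := a₂ - x₀ with hd'
  have hd0 : 0 < d := by simp [hd']; linarith
  set M : ℝ := ∫ y, |f y| with hM
  have hM0 : 0 ≤ M := integral_nonneg fun y => abs_nonneg _
  set F : ℕ → ℝ → ℝ := fun n y => f y * (t ^ n / (y - x₀) ^ (n + 1)) with hF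
  have hmeas : ∀ n, AEStronglyMeasurable (fun y : ℝ => t ^ n / (y - x₀) ^ (n + 1))
      (volume : Measure ℝ) := fun n => meas_kernel _ _ _
  have hbdd : ∀ n, ∀ y ∈ Icc a₂ a₄, |t ^ n / (y - x₀) ^ (n + 1)| ≤ |t| ^ n / d ^ (n + 1) := by
    intro n y hy
    have := kernel_bdd (a₄ := a₄) hd (t ^ n) (n + 1) y hy
    simpa [abs_pow] using this
  have hint : ∀ n, Integrable (F n) (volume : Measure ℝ) := fun n =>
    integrable_mul_bdd hf (hmeas n) hsupp (hbdd n)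
  have hsum : Summable fun n => ∫ y, ‖F n y‖ := by
    have hgeo : Summable (fun n : ℕ => (M / d) * (|t| / d) ^ n) := by
      apply Summable.mul_left
      apply summable_geometric_of_abs_lt_one
      rw [abs_of_nonneg (by positivity), div_lt_one hd0]
      exact ht
    refine Summable.of_nonneg_of_le (fun n => integral_nonneg fun y => norm_nonneg _)
      (fun n => ?_) hgeo
    have h1 : ∫ y, |F n y| ≤ (|t| ^ n / d ^ (n + 1)) * M :=
      integral_abs_mul_bdd hf (hmeas n) hsupp (hbdd n)
    have h2 : (|t| ^ n / d ^ (n + 1)) * M = (M / d) * (|t| / d) ^ n := by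
      rw [div_pow, pow_succ]
      field_simp
    calc (∫ y, ‖F n y‖) = ∫ y, |F n y| := by simp [Real.norm_eq_abs]
      _ ≤ (|t| ^ n / d ^ (n + 1)) * M := h1
      _ = (M / d) * (|t| / d) ^ n := h2
  have hswap := hasSum_integral_of_summable_integral_norm hint hsum
  have hptw : (fun y => ∑' n, F n y) = fun y => f y / (y - (x₀ + t)) := by
    funext y
    by_cases hy : f y = 0
    · simp [hF, hy]
    · have hyIcc := hsupp hy
      have hu : d ≤ y - x₀ := by have := hyIcc.1; simp only [hd']; linarith
      have hgeom := (hasSum_inv_geom hd0 ht hu).mul_left (f y)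
      simp only [hF]
      rw [hgeom.tsum_eq, mul_one_div]
      congr 1
      ring
  have hterm : ∀ n, (∫ y, F n y) = (∫ y, f y / (y - x₀) ^ (n + 1)) * t ^ n := by
    intro n
    have he : ∀ y, F n y = t ^ n * (f y / (y - x₀) ^ (n + 1)) := by
      intro y
      simp only [hF]
      rw [div_eq_mul_inv, div_eq_mul_inv]
      ring
    calc (∫ y, F n y) = ∫ y, t ^ n * (f y / (y - x₀) ^ (n + 1)) := by simp only [he]
      _ = t ^ n * ∫ y, f y / (y - x₀) ^ (n + 1) := integral_const_mul _ _
      _ = (∫ y, f y / (y - x₀) ^ (n + 1)) * t ^ n := mul_comm _ _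
  rw [hptw, show (fun n => ∫ y, F n y) = (fun n => (∫ y, f y / (y - x₀) ^ (n + 1)) * t ^ n)
    from funext hterm] at hswap
  exact hswap



noncomputable def cauchyF (f : ℝ → ℝ) (x : ℝ) : ℝ := ∫ y, f y / (y - x)

noncomputable def coeffSeries (f : ℝ → ℝ) (x₀ : ℝ) : FormalMultilinearSeries ℝ ℝ ℝ :=
  fun n => ContinuousMultilinearMap.mkPiRing ℝ (Fin n) (∫ y, f y / (y - x₀) ^ (n + 1))

lemma abs_coeff_le {a₂ a₄ : ℝ} {f : ℝ → ℝ} (hf : Integrable f (volume : Measure ℝ))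
    (hsupp : Function.support f ⊆ Icc a₂ a₄) {x₀ : ℝ} (hd : x₀ < a₂) (n : ℕ) :
    |∫ y, f y / (y - x₀) ^ (n + 1)| ≤ (1 / (a₂ - x₀) ^ (n + 1)) * ∫ y, |f y| := by
  have he : (fun y => f y / (y - x₀) ^ (n + 1))
      = fun y => f y * (1 / (y - x₀) ^ (n + 1)) := by
    funext y
    rw [mul_one_div]
  rw [he]
  have hb := kernel_bdd (a₄ := a₄) hd 1 (n + 1)
  simp only [abs_one] at hb
  exact abs_integral_mul_bdd hf (meas_kernel 1 x₀ (n + 1)) hsupp hb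

lemma hasFPowerSeriesOnBall_cauchyF {a₂ a₄ : ℝ} {f : ℝ → ℝ}
    (hf : Integrable f (volume : Measure ℝ))
    (hsupp : Function.support f ⊆ Icc a₂ a₄) {x₀ : ℝ} (hd : x₀ < a₂) :
    HasFPowerSeriesOnBall (cauchyF f) (coeffSeries f x₀) x₀
      (ENNReal.ofReal ((a₂ - x₀) / 2)) := by
  have hd0 : (0:ℝ) < a₂ - x₀ := by linarith
  have hM0 : (0:ℝ) ≤ ∫ y, |f y| := integral_nonneg fun y => abs_nonneg _
  set M : ℝ := ∫ y, |f y| with hM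
  refine ⟨?_, ENNReal.ofReal_pos.mpr (by positivity), fun {y} hy => ?_⟩
  · have hb : ∀ n : ℕ, ‖coeffSeries f x₀ n‖ * (((a₂ - x₀)/2).toNNReal : ℝ) ^ n ≤ M / (a₂ - x₀) := by
      intro n
      have hcoe : (((a₂ - x₀)/2).toNNReal : ℝ) = (a₂ - x₀)/2 :=
        Real.coe_toNNReal _ (by positivity)
      have hnorm : ‖coeffSeries f x₀ n‖ = |∫ y, f y / (y - x₀) ^ (n + 1)| := by
        simp [coeffSeries, ContinuousMultilinearMap.norm_mkPiRing, Real.norm_eq_abs]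
      rw [hcoe, hnorm]
      have h1 := abs_coeff_le hf hsupp hd n
      calc |∫ y, f y / (y - x₀) ^ (n + 1)| * ((a₂ - x₀)/2) ^ n
          ≤ ((1 / (a₂ - x₀) ^ (n + 1)) * M) * ((a₂ - x₀)/2) ^ n := by
            gcongr
        _ = (M / (a₂ - x₀)) * (1/2) ^ n := by
            rw [div_pow, div_pow]
            field_simp
            ring
        _ ≤ (M / (a₂ - x₀)) * 1 :=
            mul_le_mul_of_nonneg_left (pow_le_one₀ (by norm_num) (by norm_num))
              (div_nonneg hM0 hd0.le)
        _ = M / (a₂ - x₀) := mul_one _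
    exact FormalMultilinearSeries.le_radius_of_bound _ (M / (a₂ - x₀)) hb
  · have hyd : |y| < (a₂ - x₀) / 2 := by
      rw [EMetric.mem_ball, edist_dist, Real.dist_eq, sub_zero] at hy
      rwa [ENNReal.ofReal_lt_ofReal_iff (by positivity)] at hy
    have h := hasSum_coeff hf hsupp hd (by linarith : |y| < a₂ - x₀)
    have he : ∀ n : ℕ, ((coeffSeries f x₀ n) fun _ => y)
        = (∫ y', f y' / (y' - x₀) ^ (n + 1)) * y ^ n := by
      intro n
      simp [coeffSeries, ContinuousMultilinearMap.mkPiRing_apply, smul_eq_mul,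
        Finset.prod_const, Finset.card_univ, mul_comm]
    rw [show (fun n => (coeffSeries f x₀ n) fun _ => y)
        = fun n => (∫ y', f y' / (y' - x₀) ^ (n + 1)) * y ^ n from funext he]
    exact h


end TruncHTAux

open TruncHTAux

/-- The truncated Hilbert transform with overlap `H_T : L²(a₂,a₄) → L²(a₁,a₃)`
has trivial nullspace: if `H_T f = 0` then `f = 0`. -/
theorem truncHT_injective (a₁ a₂ a₃ a₄ : ℝ)
    (h12 : a₁ < a₂) (h23 : a₂ < a₃) (h34 : a₃ < a₄)
    (f : ℝ → ℝ) (hf : MemLp f 2 (volume : Measure ℝ))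
    (hsupp : Function.support f ⊆ Icc a₂ a₄)
    (hHT : truncHT a₁ a₂ a₃ a₄ f =ᵐ[volume] 0) :
    f =ᵐ[volume] 0 := by
  -- f is integrable
  have hfi : Integrable f (volume : Measure ℝ) := by
    rw [← memLp_one_iff_integrable]
    refine hf.mono_exponent_of_measure_support_ne_top
      (s := Icc a₂ a₄) (fun x hx => ?_) ?_ (by norm_num)
    · by_contra h
      exact hx (hsupp h)
    · rw [Real.volume_Icc]
      exact ENNReal.ofReal_ne_top
  have hM0 : (0:ℝ) ≤ ∫ y, |f y| := integral_nonneg fun y => abs_nonneg _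
  set x₀ : ℝ := (a₁ + a₂) / 2 with hx₀def
  have hx₀₁ : a₁ < x₀ := by rw [hx₀def]; linarith
  have hx₀₂ : x₀ < a₂ := by rw [hx₀def]; linarith
  set d : ℝ := a₂ - x₀ with hddef
  have hd0 : (0:ℝ) < d := by rw [hddef]; linarith
  have hball : Metric.ball x₀ (d/2) ⊆ Ioo a₁ a₂ := by
    intro x hx
    rw [Metric.mem_ball, Real.dist_eq] at hx
    have h1 := abs_lt.mp hx
    constructor
    · linarith [h1.1]
    · linarith [h1.2]
  -- the indicator of f is f itself
  have hind : (Icc a₂ a₄).indicator f = f := indicator_eq_self.mpr hsupp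
  -- the principal value is an honest integral to the left of a₂
  have hpv : ∀ x ∈ Ioo a₁ a₂, pvHilbert f x = (1 / Real.pi) * cauchyF f x := by
    rintro x ⟨hx1, hx2⟩
    have hev : (fun _ : ℝ => (1 / Real.pi) * cauchyF f x)
        =ᶠ[nhdsWithin (0:ℝ) (Ioi 0)]
        (fun ε => (1 / Real.pi) * ∫ y in {y : ℝ | ε ≤ |y - x|}, f y / (y - x)) := by
      filter_upwards [Ioo_mem_nhdsGT_of_mem
        (⟨le_refl (0:ℝ), by linarith⟩ : (0:ℝ) ∈ Ico (0:ℝ) (a₂ - x))] with ε hε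
      congr 1
      rw [cauchyF]
      refine (setIntegral_eq_integral_of_forall_compl_eq_zero fun y hy => ?_).symm
      have hy' : |y - x| < ε := not_le.mp hy
      have hya : y < a₂ := by
        have h3 := le_abs_self (y - x)
        have h4 := hε.2
        linarith
      have hfy : f y = 0 := by
        by_contra h
        exact absurd (hsupp h).1 (by linarith)
      simp [hfy]
    exact Filter.Tendsto.limUnder_eq (Filter.Tendsto.congr' hev tendsto_const_nhds)
  -- the Cauchy transform vanishes a.e. on (a₁, a₂)
  have hFae : ∀ᵐ x ∂(volume : Measure ℝ), x ∈ Ioo a₁ a₂ → cauchyF f x = 0 := by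
    filter_upwards [hHT] with x hx hmem
    simp only [Pi.zero_apply] at hx
    have hx13 : x ∈ Icc a₁ a₃ := ⟨hmem.1.le, le_of_lt (lt_trans hmem.2 h23)⟩
    have h1 : truncHT a₁ a₂ a₃ a₄ f x = pvHilbert f x := by
      unfold truncHT
      rw [hind, indicator_of_mem hx13]
    rw [h1, hpv x hmem] at hx
    exact (mul_eq_zero.mp hx).resolve_left (one_div_ne_zero Real.pi_ne_zero)
  -- the power series of the Cauchy transform at x₀
  have hps := hasFPowerSeriesOnBall_cauchyF hfi hsupp hx₀₂
  have hcont : ContinuousOn (cauchyF f) (Metric.ball x₀ (d/2)) := by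
    have h1 := hps.continuousOn
    have h2 : Metric.eball x₀ (ENNReal.ofReal ((a₂ - x₀)/2)) = Metric.ball x₀ (d/2) := by
      rw [show ENNReal.ofReal ((a₂ - x₀)/2) = (((a₂ - x₀)/2).toNNReal : ℝ≥0∞) from rfl,
        Metric.eball_coe, Real.coe_toNNReal _ (by positivity)]
    rwa [h2] at h1
  -- vanishing a.e. + continuity ⟹ vanishing everywhere on the ball
  have hnull : volume {x : ℝ | x ∈ Metric.ball x₀ (d/2) ∧ cauchyF f x ≠ 0} = 0 := by
    rw [ae_iff] at hFae
    refine measure_mono_null (fun x hx => ?_) hFae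
    simp only [mem_setOf_eq] at hx ⊢
    intro h
    exact hx.2 (h (hball hx.1))
  have hzero : ∀ x ∈ Metric.ball x₀ (d/2), cauchyF f x = 0 := by
    intro x hx
    by_contra hne
    have hcont_at : ContinuousAt (cauchyF f) x :=
      hcont.continuousAt (Metric.isOpen_ball.mem_nhds hx)
    have hev : ∀ᶠ z in nhds x, z ∈ Metric.ball x₀ (d/2) ∧ cauchyF f z ≠ 0 :=
      (Metric.isOpen_ball.eventually_mem hx).and (hcont_at.eventually_ne hne)
    obtain ⟨ε, hε, hsub⟩ := Metric.eventually_nhds_iff_ball.mp hev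
    have h1 : volume (Metric.ball x ε) = 0 :=
      measure_mono_null (fun z hz => hsub z hz) hnull
    rw [Real.volume_ball, ENNReal.ofReal_eq_zero] at h1
    linarith
  -- all "inverse moments" vanish
  have hc : ∀ n : ℕ, (∫ y, f y / (y - x₀) ^ (n + 1)) = 0 := by
    have hev0 : cauchyF f =ᶠ[nhds x₀] 0 := by
      filter_upwards [Metric.ball_mem_nhds x₀ (by positivity : (0:ℝ) < d/2)] with z hz
      exact hzero z hz
    have hp0 := hps.hasFPowerSeriesAt.eq_zero_of_eventually hev0
    intro n
    have h1 : coeffSeries f x₀ n = 0 := by rw [hp0]; rfl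
    have h2 := congrArg
      (fun m : ContinuousMultilinearMap ℝ (fun _ : Fin n => ℝ) ℝ => m fun _ => (1:ℝ)) h1
    simpa [coeffSeries, ContinuousMultilinearMap.mkPiRing_apply] using h2
  -- integrals of f against u·q(u) vanish, u y = (y - x₀)⁻¹
  have humeas : AEStronglyMeasurable (fun y : ℝ => (y - x₀)⁻¹) (volume : Measure ℝ) :=
    ((measurable_id.sub_const x₀).inv).aestronglyMeasurable
  have hpoly : ∀ q : Polynomial ℝ,
      ∫ y, f y * ((y - x₀)⁻¹ * Polynomial.eval (y - x₀)⁻¹ q) = 0 := by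
    intro q
    have hterm_int : ∀ k : ℕ,
        Integrable (fun y => f y * (1 / (y - x₀) ^ (k + 1))) (volume : Measure ℝ) := by
      intro k
      have hb := kernel_bdd (a₄ := a₄) hx₀₂ 1 (k + 1)
      exact integrable_mul_bdd hfi (meas_kernel 1 x₀ (k + 1)) hsupp hb
    have he : ∀ y : ℝ, f y * ((y - x₀)⁻¹ * Polynomial.eval (y - x₀)⁻¹ q)
        = ∑ k ∈ Finset.range (q.natDegree + 1),
            q.coeff k * (f y * (1 / (y - x₀) ^ (k + 1))) := by
      intro y
      rw [Polynomial.eval_eq_sum_range, Finset.mul_sum, Finset.mul_sum]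
      refine Finset.sum_congr rfl fun k _ => ?_
      rw [one_div, ← inv_pow, pow_succ]
      ring
    rw [show (fun y => f y * ((y - x₀)⁻¹ * Polynomial.eval (y - x₀)⁻¹ q))
        = fun y => ∑ k ∈ Finset.range (q.natDegree + 1),
            q.coeff k * (f y * (1 / (y - x₀) ^ (k + 1))) from funext he]
    rw [integral_finset_sum _ (fun k _ => (hterm_int k).const_mul _)]
    refine Finset.sum_eq_zero fun k _ => ?_
    have h3 : (∫ y, f y * (1 / (y - x₀) ^ (k + 1))) = ∫ y, f y / (y - x₀) ^ (k + 1) := by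
      congr 1
      funext y
      rw [mul_one_div]
    rw [integral_const_mul, h3, hc k, mul_zero]
  -- conclude via smooth test functions
  set M : ℝ := ∫ y, |f y| with hMdef
  have hα0 : (0:ℝ) < (a₂ - x₀)⁻¹ := inv_pos.mpr (by linarith)
  have hβ0 : (0:ℝ) < (a₄ - x₀)⁻¹ := inv_pos.mpr (by linarith)
  have hβα : (a₄ - x₀)⁻¹ ≤ (a₂ - x₀)⁻¹ :=
    inv_anti₀ (by linarith) (by linarith)
  have hfinal : ∀ᵐ x ∂(volume : Measure ℝ), f x = 0 := by
    refine ae_eq_zero_of_integral_contDiff_smul_eq_zero hfi.locallyIntegrable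
      (fun g hg hgsupp => ?_)
    have key : ∀ ε : ℝ, 0 < ε → |∫ y, f y * g y| ≤ ε := by
      intro ε hε
      set β : ℝ := (a₄ - x₀)⁻¹
      set α : ℝ := (a₂ - x₀)⁻¹
      set G : ℝ → ℝ := fun v => g (x₀ + v⁻¹) / v with hGdef
      have hvne : ∀ v ∈ Icc β α, v ≠ 0 := fun v hv => (hβ0.trans_le hv.1).ne'
      have hGcont : ContinuousOn G (Icc β α) := by
        apply ContinuousOn.div
        · exact hg.continuous.comp_continuousOn
            (continuousOn_const.add (continuousOn_id.inv₀ hvne))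
        · exact continuousOn_id
        · exact hvne
      set ε' : ℝ := ε / ((M + 1) * α) with hε'def
      have hε'0 : 0 < ε' := by
        rw [hε'def]
        have : (0:ℝ) < M + 1 := by linarith
        positivity
      obtain ⟨q, hq⟩ := exists_polynomial_near_of_continuousOn β α G hGcont ε' hε'0
      -- pointwise bound on the support
      have hdiff : ∀ y ∈ Icc a₂ a₄,
          |g y - (y - x₀)⁻¹ * Polynomial.eval (y - x₀)⁻¹ q| ≤ α * ε' := by
        intro y hy
        have hy2 : (0:ℝ) < y - x₀ := by
          have := hy.1; linarith
        have huy : (y - x₀)⁻¹ ∈ Icc β α := by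
          constructor
          · exact inv_anti₀ hy2 (by have := hy.2; linarith)
          · exact inv_anti₀ (by linarith) (by have := hy.1; linarith)
        have huyne : (y - x₀)⁻¹ ≠ 0 := (inv_pos.mpr hy2).ne'
        have hg_eq : g y = G ((y - x₀)⁻¹) * (y - x₀)⁻¹ := by
          rw [hGdef]
          simp only [inv_inv]
          field_simp
          congr 1
          ring
        have hq' := hq _ huy
        calc |g y - (y - x₀)⁻¹ * Polynomial.eval (y - x₀)⁻¹ q|
            = |(y - x₀)⁻¹| * |G ((y - x₀)⁻¹) - Polynomial.eval (y - x₀)⁻¹ q| := by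
              rw [hg_eq, ← abs_mul]
              congr 1
              ring
          _ ≤ α * ε' := by
              apply mul_le_mul
              · rw [abs_of_pos (by positivity)]
                exact huy.2
              · rw [abs_sub_comm]
                exact hq'.le
              · exact abs_nonneg _
              · exact hα0.le
      -- measurability of the correction term
      have hmeas2 : AEStronglyMeasurable
          (fun y : ℝ => g y - (y - x₀)⁻¹ * Polynomial.eval (y - x₀)⁻¹ q)
          (volume : Measure ℝ) := by
        apply AEStronglyMeasurable.sub hg.continuous.aestronglyMeasurable
        exact humeas.mul
          ((q.continuous_aeval.measurable.comp
            (measurable_id.sub_const x₀).inv).aestronglyMeasurable)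
      have h2 := abs_integral_mul_bdd hfi hmeas2 hsupp hdiff
      -- integrability of both pieces
      obtain ⟨C₁, hC₁⟩ := (isCompact_Icc (a := a₂) (b := a₄)).exists_bound_of_continuousOn
        hg.continuous.continuousOn
      have hint_fg : Integrable (fun y => f y * g y) (volume : Measure ℝ) := by
        refine integrable_mul_bdd hfi hg.continuous.aestronglyMeasurable hsupp
          (C := C₁) (fun y hy => ?_)
        simpa [Real.norm_eq_abs] using hC₁ y hy
      have hcont_uq : ContinuousOn
          (fun y : ℝ => (y - x₀)⁻¹ * Polynomial.eval (y - x₀)⁻¹ q) (Icc a₂ a₄) := by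
        have hyne : ∀ y ∈ Icc a₂ a₄, y - x₀ ≠ 0 := by
          intro y hy
          have := hy.1
          have : (0:ℝ) < y - x₀ := by linarith
          positivity
        have hinv : ContinuousOn (fun y : ℝ => (y - x₀)⁻¹) (Icc a₂ a₄) :=
          ((continuous_id.sub continuous_const).continuousOn).inv₀ hyne
        exact hinv.mul (q.continuous_aeval.comp_continuousOn hinv)
      obtain ⟨C₂, hC₂⟩ := (isCompact_Icc (a := a₂) (b := a₄)).exists_bound_of_continuousOn
        hcont_uq
      have hint_fq : Integrable
          (fun y => f y * ((y - x₀)⁻¹ * Polynomial.eval (y - x₀)⁻¹ q))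
          (volume : Measure ℝ) := by
        refine integrable_mul_bdd hfi
          (humeas.mul ((q.continuous_aeval.measurable.comp
            (measurable_id.sub_const x₀).inv).aestronglyMeasurable)) hsupp
          (C := C₂) (fun y hy => ?_)
        have := hC₂ y hy
        simpa only [Real.norm_eq_abs] using this
      have hsplit : ∫ y, f y * (g y - (y - x₀)⁻¹ * Polynomial.eval (y - x₀)⁻¹ q)
          = (∫ y, f y * g y)
            - ∫ y, f y * ((y - x₀)⁻¹ * Polynomial.eval (y - x₀)⁻¹ q) := by
        rw [← integral_sub hint_fg hint_fq]
        congr 1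
        funext y
        ring
      rw [hsplit, hpoly q, sub_zero] at h2
      -- h2 : |∫ f g| ≤ α * ε' * M
      have h4 : α * ε' * M ≤ ε := by
        rw [hε'def]
        have hM1 : (0:ℝ) < M + 1 := by linarith
        have heq : α * (ε / ((M + 1) * α)) * M = ε * (M / (M + 1)) := by
          field_simp
        rw [heq]
        have : M / (M + 1) ≤ 1 := by
          rw [div_le_one hM1]
          linarith
        calc ε * (M / (M + 1)) ≤ ε * 1 := by
              apply mul_le_mul_of_nonneg_left this hε.le
          _ = ε := mul_one ε
      exact le_trans h2 h4
    have h0 : (∫ y, f y * g y) = 0 := by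
      by_contra hne
      have hpos : 0 < |∫ y, f y * g y| := abs_pos.mpr hne
      have := key (|∫ y, f y * g y| / 2) (by positivity)
      linarith
    calc ∫ x, g x • f x = ∫ y, f y * g y := by
          congr 1
          funext y
          simp [smul_eq_mul, mul_comm]
      _ = 0 := h0
  filter_upwards [hfinal] with x hx
  simp [hx]
end

section
/- The range of the truncated Hilbert transform with overlap H_T : L²(a₂,a₄) → L²(a₁,a₃) is a proper subset of L²(a₁,a₃). -/
open MeasureTheory Filter Set

lemma kernel_bound {f : ℝ → ℝ} {a₂ a₄ : ℝ}
    (hsupp : ∀ y, y ∉ Icc a₂ a₄ → f y = 0) {t δ : ℝ} (hδ : 0 < δ) (ht : t + δ ≤ a₂)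
    (m : ℕ) (y : ℝ) : |f y / (y - t) ^ m| ≤ |f y| / δ ^ m := by
  by_cases hy : y ∈ Icc a₂ a₄
  · have h1 : δ ≤ y - t := by have := hy.1; linarith
    have h2 : (0:ℝ) < δ ^ m := pow_pos hδ m
    have h3 : δ ^ m ≤ (y - t) ^ m := pow_le_pow_left₀ hδ.le h1 m
    rw [abs_div, abs_of_pos (lt_of_lt_of_le h2 h3)]
    exact div_le_div_of_nonneg_left (abs_nonneg _) h2 h3
  · simp [hsupp y hy]

lemma integrable_kernel {f : ℝ → ℝ} {a₂ a₄ : ℝ} (hint : Integrable f (volume : Measure ℝ))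
    (hsupp : ∀ y, y ∉ Icc a₂ a₄ → f y = 0) {t δ : ℝ} (hδ : 0 < δ) (ht : t + δ ≤ a₂) (m : ℕ) :
    Integrable (fun y => f y / (y - t) ^ m) (volume : Measure ℝ) := by
  refine ((hint.norm.div_const (δ ^ m)).mono' ?_ ?_)
  · exact (hint.aemeasurable.div
      ((measurable_id.sub measurable_const).pow_const m).aemeasurable).aestronglyMeasurable
  · exact ae_of_all _ fun y => by
      rw [Real.norm_eq_abs]
      exact le_trans (le_of_eq rfl) (by
        have := kernel_bound hsupp hδ ht m y
        simpa [Real.norm_eq_abs] using this)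

lemma hasDerivAt_D {f : ℝ → ℝ} {a₂ a₄ : ℝ} (hint : Integrable f (volume : Measure ℝ))
    (hsupp : ∀ y, y ∉ Icc a₂ a₄ → f y = 0) {x : ℝ} (hx : x < a₂) (n : ℕ) :
    HasDerivAt (fun t => ∫ y, f y / (y - t) ^ (n + 1))
      (((n : ℝ) + 1) * ∫ y, f y / (y - x) ^ (n + 2)) x := by
  have hδ : 0 < (a₂ - x) / 2 := by linarith
  have key := hasDerivAt_integral_of_dominated_loc_of_deriv_le (μ := (volume : Measure ℝ))
      (F := fun t y => f y / (y - t) ^ (n + 1))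
      (F' := fun t y => ((n : ℝ) + 1) * (f y / (y - t) ^ (n + 2)))
      (x₀ := x) (bound := fun y => ((n : ℝ) + 1) * (|f y| / ((a₂ - x) / 2) ^ (n + 2)))
      (Metric.ball_mem_nhds x hδ)
      (Eventually.of_forall fun t => (hint.aemeasurable.div
        ((measurable_id.sub measurable_const).pow_const (n + 1)).aemeasurable).aestronglyMeasurable)
      (integrable_kernel hint hsupp (show (0:ℝ) < a₂ - x by linarith)
        (by linarith) (n + 1))
      (((hint.aemeasurable.div
        ((measurable_id.sub measurable_const).pow_const (n + 2)).aemeasurable).aestronglyMeasurable).const_mul _)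
      (ae_of_all _ ?_) (((hint.norm.div_const _).const_mul _)) (ae_of_all _ ?_)
  · rw [show (∫ (a : ℝ), (↑n + 1) * (f a / (a - x) ^ (n + 2))) = ((n:ℝ) + 1) * ∫ (y : ℝ), f y / (y - x) ^ (n + 2) from integral_const_mul _ _] at key
    exact key.2
  · intro y t ht
    have ht' : t + (a₂ - x) / 2 ≤ a₂ := by
      have := Metric.mem_ball.mp ht
      rw [Real.dist_eq] at this
      have := abs_lt.mp this
      linarith [this.2]
    have := kernel_bound hsupp hδ ht' (n + 2) y
    rw [Real.norm_eq_abs, abs_mul]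
    have hn : |((n:ℝ) + 1)| = (n:ℝ) + 1 := abs_of_pos (by positivity)
    rw [hn]
    exact mul_le_mul_of_nonneg_left this (by positivity)
  · intro y t ht
    by_cases hfy : f y = 0
    · simp only [hfy, zero_div, mul_zero]
      exact hasDerivAt_const t 0
    · have hy : y ∈ Icc a₂ a₄ := by by_contra h; exact hfy (hsupp y h)
      have ht' : t + (a₂ - x) / 2 ≤ a₂ := by
        have := Metric.mem_ball.mp ht
        rw [Real.dist_eq] at this
        have := abs_lt.mp this
        linarith [this.2]
      have hyt : (0:ℝ) < y - t := by have := hy.1; linarith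
      have hne : y - t ≠ 0 := ne_of_gt hyt
      have h1 : HasDerivAt (fun t => y - t) (-1) t := (hasDerivAt_id t).const_sub y
      have h2 := h1.fun_pow (n + 1)
      have h3 := h2.fun_inv (pow_ne_zero _ hne)
      have h4 := h3.const_mul (f y)
      simp only [Nat.add_sub_cancel] at h4
      have hfun : (fun t => f y / (y - t) ^ (n + 1))
          = fun t => f y * ((y - t) ^ (n + 1))⁻¹ := by
        funext s; rw [div_eq_mul_inv]
      rw [hfun]
      convert h4 using 1
      · rfl
      field_simp
      push_cast
      ring

/-- The range of the truncated Hilbert transform with overlap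
`H_T : L²(a₂,a₄) → L²(a₁,a₃)` is a proper subset of `L²(a₁,a₃)`: there is a
`g ∈ L²(a₁,a₃)` which is not (a.e. on `(a₁,a₃)`) of the form `H_T f` for any
`f ∈ L²(a₂,a₄)`. -/
theorem truncHT_range_proper (a₁ a₂ a₃ a₄ : ℝ)
    (h12 : a₁ < a₂) (h23 : a₂ < a₃) (h34 : a₃ < a₄) :
    ∃ g : ℝ → ℝ, MemLp g 2 (volume : Measure ℝ) ∧ Function.support g ⊆ Icc a₁ a₃ ∧
      ∀ f : ℝ → ℝ, MemLp f 2 (volume : Measure ℝ) → Function.support f ⊆ Icc a₂ a₄ →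
        ¬ (truncHT a₁ a₂ a₃ a₄ f =ᵐ[volume] g) := by
  refine ⟨(Icc a₂ a₃).indicator fun _ => (1:ℝ), ?_, ?_, ?_⟩
  · exact memLp_indicator_const 2 measurableSet_Icc 1 (Or.inr measure_Icc_lt_top.ne)
  · rw [Set.support_indicator]
    exact inter_subset_left.trans (Icc_subset_Icc h12.le le_rfl)
  intro f hf2 hfsupp hae
  set x₀ : ℝ := (a₁ + a₂) / 2 with hx₀def
  have hx₀₂ : x₀ < a₂ := by rw [hx₀def]; linarith
  have hx₀₁ : a₁ < x₀ := by rw [hx₀def]; linarith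
  have hsupp : ∀ y, y ∉ Icc a₂ a₄ → f y = 0 := fun y hy =>
    Function.notMem_support.mp fun h => hy (hfsupp h)
  have hFf : (Icc a₂ a₄).indicator f = f := indicator_eq_self.mpr hfsupp
  have hint : Integrable f (volume : Measure ℝ) :=
    memLp_one_iff_integrable.mp
      (hf2.mono_exponent_of_measure_support_ne_top hsupp
        measure_Icc_lt_top.ne (by norm_num))
  -- Step 1: for x < a₂ the principal value is an honest integral
  have hpv : ∀ x : ℝ, x < a₂ →
      pvHilbert ((Icc a₂ a₄).indicator f) x = (1 / Real.pi) * ∫ y, f y / (y - x) := by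
    intro x hx
    rw [hFf]
    unfold pvHilbert
    apply Filter.Tendsto.limUnder_eq
    apply Filter.Tendsto.congr' _ (tendsto_const_nhds (α := ℝ)
      (x := (1 / Real.pi) * ∫ y, f y / (y - x)))
    filter_upwards [Ioo_mem_nhdsGT_of_mem (show (0:ℝ) ∈ Ico (0:ℝ) (a₂ - x) from
      ⟨le_rfl, by linarith⟩)] with ε hε
    have hset : ∫ y in {y : ℝ | ε ≤ |y - x|}, f y / (y - x) = ∫ y, f y / (y - x) := by
      apply setIntegral_eq_integral_of_forall_compl_eq_zero
      intro y hy
      have h1 : |y - x| < ε := lt_of_not_ge hy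
      have h2 : y < a₂ := by
        have := (abs_lt.mp h1).2
        linarith [hε.2]
      rw [hsupp y (fun hmem => absurd hmem.1 (not_le.mpr h2)), zero_div]
    rw [hset]
  -- Step 2: D₀ = 0 a.e. on (a₁, a₂)
  have hae0 : ∀ᵐ x ∂(volume.restrict (Ioo a₁ a₂)), (∫ y, f y / (y - x)) = 0 := by
    filter_upwards [ae_restrict_of_ae hae, ae_restrict_mem measurableSet_Ioo] with x hx hmem
    have h1 : truncHT a₁ a₂ a₃ a₄ f x = (1 / Real.pi) * ∫ y, f y / (y - x) := by
      rw [truncHT, indicator_of_mem (show x ∈ Icc a₁ a₃ from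
        ⟨hmem.1.le, by linarith [hmem.2]⟩)]
      exact hpv x hmem.2
    have h2 : (Icc a₂ a₃).indicator (fun _ => (1:ℝ)) x = 0 :=
      indicator_of_notMem (fun h => absurd h.1 (not_le.mpr hmem.2)) _
    rw [h1, h2] at hx
    rcases mul_eq_zero.mp hx with h | h
    · exact absurd h (one_div_ne_zero Real.pi_ne_zero)
    · exact h
  -- Step 3: D₀ = 0 everywhere on (a₁, a₂)
  have hEq0 : EqOn (fun x => ∫ y, f y / (y - x) ^ (0 + 1)) 0 (Ioo a₁ a₂) := by
    apply Measure.eqOn_of_ae_eq (μ := (volume : Measure ℝ))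
    · filter_upwards [hae0] with x hx
      simp only [zero_add, pow_one]
      exact hx
    · intro x hx
      exact (hasDerivAt_D hint hsupp hx.2 0).continuousAt.continuousWithinAt
    · exact continuousOn_const
    · rw [interior_Ioo]; exact subset_closure
  -- Step 4: all Dₙ vanish on (a₁, a₂)
  have hEqn : ∀ n : ℕ, ∀ x ∈ Ioo a₁ a₂, (∫ y, f y / (y - x) ^ (n + 1)) = 0 := by
    intro n
    induction n with
    | zero => intro x hx; simpa using hEq0 hx
    | succ n ih =>
      intro x hx
      have h1 := hasDerivAt_D hint hsupp hx.2 n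
      have h2 : HasDerivAt (fun t => ∫ y, f y / (y - t) ^ (n + 1)) 0 x := by
        refine HasDerivAt.congr_of_eventuallyEq (hasDerivAt_const x 0) ?_
        filter_upwards [isOpen_Ioo.mem_nhds hx] with t ht
        exact ih t ht
      have h3 := h1.unique h2
      have hn1 : ((n:ℝ) + 1) ≠ 0 := by positivity
      have := (mul_eq_zero.mp h3).resolve_left hn1
      exact this
  have hmom : ∀ n : ℕ, (∫ y, f y / (y - x₀) ^ (n + 1)) = 0 :=
    fun n => hEqn n x₀ ⟨hx₀₁, hx₀₂⟩
  -- Step 5: integrate against polynomials in (y - x₀)⁻¹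
  have hψint : Integrable (fun y => f y / (y - x₀)) (volume : Measure ℝ) := by
    have := integrable_kernel hint hsupp (show (0:ℝ) < a₂ - x₀ by linarith)
      (by linarith) 1
    simpa [pow_one] using this
  have hpoly : ∀ p : Polynomial ℝ,
      Integrable (fun y => Polynomial.eval ((y - x₀)⁻¹) p * (f y / (y - x₀))) (volume : Measure ℝ) ∧
      (∫ y, Polynomial.eval ((y - x₀)⁻¹) p * (f y / (y - x₀))) = 0 := by
    intro p
    induction p using Polynomial.induction_on' with
    | monomial n a =>
      have hfun : (fun y => Polynomial.eval ((y - x₀)⁻¹) (Polynomial.monomial n a)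
            * (f y / (y - x₀)))
          = fun y => a * (f y / (y - x₀) ^ (n + 1)) := by
        funext y
        simp only [Polynomial.eval_monomial, div_eq_mul_inv, inv_pow, pow_succ, mul_inv]
        ring
      constructor
      · rw [hfun]
        exact (integrable_kernel hint hsupp (show (0:ℝ) < a₂ - x₀ by linarith)
          (by linarith) (n + 1)).const_mul a
      · rw [hfun, integral_const_mul, hmom n, mul_zero]
    | add p q hp hq =>
      have hfun : (fun y => Polynomial.eval ((y - x₀)⁻¹) (p + q) * (f y / (y - x₀)))
          = fun y => Polynomial.eval ((y - x₀)⁻¹) p * (f y / (y - x₀))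
              + Polynomial.eval ((y - x₀)⁻¹) q * (f y / (y - x₀)) := by
        funext y; rw [Polynomial.eval_add]; ring
      refine ⟨by rw [hfun]; exact hp.1.add hq.1, ?_⟩
      rw [hfun, integral_add hp.1 hq.1, hp.2, hq.2, add_zero]
  -- Step 6: ψ = f/(·-x₀) vanishes a.e.
  have hψ0 : ∀ᵐ y ∂(volume : Measure ℝ), f y / (y - x₀) = 0 := by
    apply ae_eq_zero_of_integral_contDiff_smul_eq_zero hψint.locallyIntegrable
    intro G hG hGsupp
    set I := ∫ y, G y • (f y / (y - x₀)) with hIdef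
    have hIle : ∀ ε : ℝ, 0 < ε → |I| ≤ ε := by
      intro ε hε
      set c : ℝ := (a₄ - x₀)⁻¹ with hcdef
      set d : ℝ := (a₂ - x₀)⁻¹ with hddef
      have hc : 0 < c := inv_pos.mpr (by linarith)
      have hGc : ContinuousOn (fun u : ℝ => G (x₀ + u⁻¹)) (Icc c d) := by
        apply hG.continuous.comp_continuousOn
        apply ContinuousOn.add continuousOn_const
        exact ContinuousOn.inv₀ continuousOn_id
          (fun u hu => ne_of_gt (lt_of_lt_of_le hc hu.1))
      set C : ℝ := ∫ y, |f y / (y - x₀)| with hCdef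
      have hC0 : 0 ≤ C := integral_nonneg fun y => abs_nonneg _
      set ε' : ℝ := ε / (C + 1) with hε'def
      have hε' : 0 < ε' := div_pos hε (by linarith)
      obtain ⟨p, hp⟩ := exists_polynomial_near_of_continuousOn c d _ hGc ε' hε'
      have hGint : Integrable (fun y => G y * (f y / (y - x₀))) (volume : Measure ℝ) :=
        (hG.continuous.bounded_above_of_compact_support hGsupp).elim fun C hC =>
          hψint.bdd_mul hG.continuous.aestronglyMeasurable (ae_of_all _ hC)
      have hpψ := hpoly p
      have hsplit : I = ∫ y, (G y - Polynomial.eval ((y - x₀)⁻¹) p) * (f y / (y - x₀)) := by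
        rw [hIdef]
        simp only [smul_eq_mul, sub_mul]
        rw [integral_sub hGint hpψ.1, hpψ.2, sub_zero]
      have hbd : ∀ y, ‖(G y - Polynomial.eval ((y - x₀)⁻¹) p) * (f y / (y - x₀))‖
          ≤ ε' * |f y / (y - x₀)| := by
        intro y
        by_cases hfy : f y = 0
        · simp [hfy]
        · have hy : y ∈ Icc a₂ a₄ := by by_contra h; exact hfy (hsupp y h)
          have hypos : (0:ℝ) < y - x₀ := by linarith [hy.1]
          have hmem : (y - x₀)⁻¹ ∈ Icc c d :=
            ⟨inv_anti₀ hypos (by linarith [hy.2]),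
             inv_anti₀ (by linarith) (by linarith [hy.1])⟩
          have harg : x₀ + ((y - x₀)⁻¹)⁻¹ = y := by rw [inv_inv]; ring
          have := hp _ hmem
          rw [harg] at this
          rw [norm_mul, Real.norm_eq_abs, Real.norm_eq_abs]
          apply mul_le_mul_of_nonneg_right _ (abs_nonneg _)
          rw [abs_sub_comm]
          exact this.le
      calc |I| ≤ ∫ y, ε' * |f y / (y - x₀)| := by
            rw [hsplit, ← Real.norm_eq_abs]
            exact norm_integral_le_of_norm_le (hψint.abs.const_mul ε') (ae_of_all _ hbd)
        _ = ε' * C := by rw [integral_const_mul]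
        _ ≤ ε' * (C + 1) := by nlinarith
        _ = ε := by rw [hε'def]; field_simp
    have hI0 : I = 0 := by
      by_contra hI
      have h1 : 0 < |I| := abs_pos.mpr hI
      have := hIle (|I| / 2) (by linarith)
      linarith
    exact hI0
  -- Step 7: f = 0 a.e.
  have hf0 : ∀ᵐ y ∂(volume : Measure ℝ), f y = 0 := by
    have hne : ∀ᵐ y ∂(volume : Measure ℝ), y ≠ x₀ := by
      have h1 : {y : ℝ | ¬ y ≠ x₀} = {x₀} := by ext y; simp
      rw [ae_iff, h1]
      exact measure_singleton x₀
    filter_upwards [hψ0, hne] with y h1 h2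
    exact (div_eq_zero_iff.mp h1).resolve_right (sub_ne_zero.mpr h2)
  -- Step 8: truncHT f = 0 everywhere, contradicting g ≠ᵐ 0
  have hHT : ∀ x : ℝ, truncHT a₁ a₂ a₃ a₄ f x = 0 := by
    intro x
    have hpv0 : pvHilbert ((Icc a₂ a₄).indicator f) x = 0 := by
      rw [hFf]
      unfold pvHilbert
      have hfun : (fun ε : ℝ => (1 / Real.pi) * ∫ y in {y : ℝ | ε ≤ |y - x|}, f y / (y - x))
          = fun _ => (0:ℝ) := by
        funext ε
        rw [integral_eq_zero_of_ae, mul_zero]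
        filter_upwards [ae_restrict_of_ae hf0] with y hy
        simp [hy]
      rw [hfun]
      exact Filter.Tendsto.limUnder_eq tendsto_const_nhds
    rw [truncHT]
    by_cases hx : x ∈ Icc a₁ a₃
    · rw [indicator_of_mem hx, hpv0]
    · rw [indicator_of_notMem hx]
  have hg0 : ∀ᵐ x ∂(volume : Measure ℝ), (Icc a₂ a₃).indicator (fun _ => (1:ℝ)) x = 0 := by
    filter_upwards [hae] with x hx
    rw [← hx, hHT]
  rw [ae_iff] at hg0
  have hsub : Icc a₂ a₃ ⊆ {x : ℝ | ¬ (Icc a₂ a₃).indicator (fun _ => (1:ℝ)) x = 0} := by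
    intro x hx
    simp only [mem_setOf_eq, indicator_of_mem hx]
    norm_num
  have hle := measure_mono (μ := (volume : Measure ℝ)) hsub
  rw [hg0] at hle
  have hzero : volume (Icc a₂ a₃) = 0 := le_antisymm hle zero_le
  rw [Real.volume_Icc] at hzero
  have := ENNReal.ofReal_eq_zero.mp hzero
  linarith
end
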